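/- Let C be a GCM of rank 2 of type A_1^{(1)}, i.e., C = [[2,-2],[-2,2]], with symmetrizer D = diag(1,1). Write the deformed Cartan matrix as C(q,t,μ) = (Id − tX) t^{-1} q^D over ℤ[Γ₀][t] where Γ₀ = q^ℤ × μ^ℤ. Then all entries of the inverse matrix C̃(q,t,μ) = q^{-D} t (Id + Σ_{k>0} X^k t^k), expanded as formal power series in t, have coefficients in ℤ_{≥0}[Γ₀]. -/

import Mathlib

/-- Monomial `q^{n₀} a^{n₁} b^{n₂}` in the group ring `ℤ[Γ₀]`, `Γ₀ = q^ℤ × a^ℤ × b^ℤ`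
(`a = μ₁₂⁽¹⁾`, `b = μ₁₂⁽²⁾`, and `μ₂₁⁽ᵍ⁾` are their inverses). -/
noncomputable def stmt14Mono (v : Fin 3) (m : ℤ) : AddMonoidAlgebra ℤ (Fin 3 →₀ ℤ) :=
  AddMonoidAlgebra.single (Finsupp.single v m) 1

/-- Embedding of `ℤ[Γ₀]` in `ℤ[Γ₀]((t))` at `t`-degree `m`. -/
noncomputable def stmt14T (m : ℤ) (r : AddMonoidAlgebra ℤ (Fin 3 →₀ ℤ)) :
    LaurentSeries (AddMonoidAlgebra ℤ (Fin 3 →₀ ℤ)) :=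
  HahnSeries.single m r

/-- The deformed GCM of type `A₁⁽¹⁾` (`C = [[2,-2],[-2,2]]`, `D = Id`):
diagonal entries `q t⁻¹ + q⁻¹ t`, off-diagonal entries `−(μ₁₂⁽¹⁾ + μ₁₂⁽²⁾)` and
`−(μ₂₁⁽¹⁾ + μ₂₁⁽²⁾)`, as a matrix over `ℤ[Γ₀]((t))`. -/
noncomputable def stmt14C :
    Matrix (Fin 2) (Fin 2) (LaurentSeries (AddMonoidAlgebra ℤ (Fin 3 →₀ ℤ))) :=
  !![stmt14T (-1) (stmt14Mono 0 1) + stmt14T 1 (stmt14Mono 0 (-1)),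
      -(stmt14T 0 (stmt14Mono 1 1 + stmt14Mono 2 1));
    -(stmt14T 0 (stmt14Mono 1 (-1) + stmt14Mono 2 (-1))),
      stmt14T (-1) (stmt14Mono 0 1) + stmt14T 1 (stmt14Mono 0 (-1))]

namespace Stmt14Aux

noncomputable abbrev R3 := AddMonoidAlgebra ℤ (Fin 3 →₀ ℤ)
noncomputable abbrev L3 := LaurentSeries R3

noncomputable instance : IsDomain R3 := NoZeroDivisors.to_isDomain _

/-- monomial `t^m γ^e` in `ℤ[Γ₀]((t))` -/
noncomputable def TT (m : ℤ) (e : Fin 3 →₀ ℤ) : L3 :=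
  HahnSeries.single m (AddMonoidAlgebra.single e 1)

lemma TT_mul (m n : ℤ) (e f : Fin 3 →₀ ℤ) : TT m e * TT n f = TT (m + n) (e + f) := by
  simp [TT, HahnSeries.single_mul_single, AddMonoidAlgebra.single_mul_single]

lemma TT_mul_eq {m n m' : ℤ} {e f e' : Fin 3 →₀ ℤ} (hm : m + n = m') (he : e + f = e') :
    TT m e * TT n f = TT m' e' := by rw [TT_mul, hm, he]

lemma TT_one : TT 0 0 = 1 := by
  rw [TT, ← AddMonoidAlgebra.one_def, HahnSeries.single_zero_one]

lemma TT_mul_eq_one {m n : ℤ} {e f : Fin 3 →₀ ℤ} (hm : m + n = 0) (he : e + f = 0) :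
    TT m e * TT n f = 1 := by rw [TT_mul_eq hm he, TT_one]

lemma single_add' (a : ℤ) (r s : R3) :
    (HahnSeries.single a (r + s) : L3) = HahnSeries.single a r + HahnSeries.single a s := by
  ext m
  by_cases h : m = a <;> simp [HahnSeries.coeff_single, h]

/-- positivity of all coefficients -/
def Pos (x : L3) : Prop := ∀ (m : ℤ) (γ : Fin 3 →₀ ℤ), 0 ≤ (x.coeff m).coeff γ

lemma Pos_add {x y : L3} (hx : Pos x) (hy : Pos y) : Pos (x + y) := by
  intro m γ
  simp only [HahnSeries.coeff_add, AddMonoidAlgebra.coeff_add, Finsupp.add_apply]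
  exact add_nonneg (hx m γ) (hy m γ)

lemma PosR_mul {r s : R3} (hr : ∀ γ, 0 ≤ r.coeff γ) (hs : ∀ γ, 0 ≤ s.coeff γ) (γ : Fin 3 →₀ ℤ) :
    0 ≤ (r * s).coeff γ := by
  classical
  rw [AddMonoidAlgebra.mul_apply]
  refine Finset.sum_nonneg fun a _ => Finset.sum_nonneg fun b _ => ?_
  dsimp only
  split_ifs
  · exact mul_nonneg (hr a) (hs b)
  · exact le_refl 0

lemma Pos_mul {x y : L3} (hx : Pos x) (hy : Pos y) : Pos (x * y) := by
  intro m γ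
  rw [HahnSeries.coeff_mul, AddMonoidAlgebra.coeff_sum, Finsupp.finset_sum_apply]
  exact Finset.sum_nonneg fun ij _ => PosR_mul (hx ij.1) (hy ij.2) γ

lemma Pos_TT (m : ℤ) (e : Fin 3 →₀ ℤ) : Pos (TT m e) := by
  intro m' γ
  rw [TT, HahnSeries.coeff_single]
  split_ifs
  · rw [AddMonoidAlgebra.coeff_single, Finsupp.single_apply]
    split_ifs <;> norm_num
  · simp

lemma Pos_one : Pos 1 := TT_one ▸ Pos_TT 0 0

lemma Pos_pow {x : L3} (hx : Pos x) (n : ℕ) : Pos (x ^ n) := by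
  induction n with
  | zero => rw [pow_zero]; exact Pos_one
  | succ k ih => rw [pow_succ]; exact Pos_mul ih hx

lemma Pos_hsum {α : Type} (s : HahnSeries.SummableFamily ℤ R3 α) (h : ∀ i, Pos (s i)) :
    Pos s.hsum := by
  intro m γ
  rw [HahnSeries.SummableFamily.coeff_hsum]
  have hfin : (Function.support fun i => (s i).coeff m).Finite :=
    (s.finite_co_support m).subset (by intro i hi; exact hi)
  rw [show ((∑ᶠ i, (s i).coeff m)).coeff γ = ∑ᶠ i, ((s i).coeff m).coeff γ from
    ((Finsupp.applyAddHom γ).comp (AddMonoidAlgebra.coeffAddEquiv : R3 ≃+ _).toAddMonoidHom).map_finsum hfin]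
  exact finsum_nonneg fun i => h i m γ

noncomputable def w1 : Fin 3 →₀ ℤ :=
  Finsupp.single 0 (-2) + Finsupp.single 1 1 + Finsupp.single 2 (-1)

noncomputable def w2 : Fin 3 →₀ ℤ :=
  Finsupp.single 0 (-2) + Finsupp.single 1 (-1) + Finsupp.single 2 1

lemma TT_orderTop (w : Fin 3 →₀ ℤ) : 0 < (TT 2 w).orderTop := by
  rw [TT, HahnSeries.orderTop_single (by simpa using Finsupp.single_ne_zero.2 one_ne_zero)]
  exact_mod_cast (by norm_num : (0:ℤ) < 2)

noncomputable def S1 : L3 :=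
  (HahnSeries.SummableFamily.powers (TT 2 w1)).hsum

noncomputable def S2 : L3 :=
  (HahnSeries.SummableFamily.powers (TT 2 w2)).hsum

lemma Pos_S1 : Pos S1 :=
  Pos_hsum _ fun n => by
    rw [HahnSeries.SummableFamily.powers_of_orderTop_pos (TT_orderTop w1)]
    exact Pos_pow (Pos_TT 2 w1) n

lemma Pos_S2 : Pos S2 :=
  Pos_hsum _ fun n => by
    rw [HahnSeries.SummableFamily.powers_of_orderTop_pos (TT_orderTop w2)]
    exact Pos_pow (Pos_TT 2 w2) n

lemma S1_inv : (1 - TT 2 w1) * S1 = 1 :=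
  HahnSeries.SummableFamily.one_sub_self_mul_hsum_powers (TT_orderTop w1)

lemma S2_inv : (1 - TT 2 w2) * S2 = 1 :=
  HahnSeries.SummableFamily.one_sub_self_mul_hsum_powers (TT_orderTop w2)

/-- the scalar `q^{-2} t^2 (1-g₁)⁻¹ (1-g₂)⁻¹` -/
noncomputable def sc : L3 := TT 2 (Finsupp.single 0 (-2)) * S1 * S2

lemma Pos_sc : Pos sc :=
  Pos_mul (Pos_mul (Pos_TT _ _) Pos_S1) Pos_S2

/-- entries of the Cartan matrix in `TT` form -/
noncomputable def dd : L3 := TT (-1) (Finsupp.single 0 1) + TT 1 (Finsupp.single 0 (-1))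
noncomputable def ee : L3 := TT 0 (Finsupp.single 1 1) + TT 0 (Finsupp.single 2 1)
noncomputable def ff : L3 := TT 0 (Finsupp.single 1 (-1)) + TT 0 (Finsupp.single 2 (-1))

lemma Pos_dd : Pos dd := Pos_add (Pos_TT _ _) (Pos_TT _ _)
lemma Pos_ee : Pos ee := Pos_add (Pos_TT _ _) (Pos_TT _ _)
lemma Pos_ff : Pos ff := Pos_add (Pos_TT _ _) (Pos_TT _ _)

lemma C_eq : stmt14C = !![dd, -ee; -ff, dd] := by
  unfold stmt14C stmt14T stmt14Mono dd ee ff TT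
  rw [single_add', single_add']

noncomputable def x1 : Fin 3 →₀ ℤ := Finsupp.single 1 1 + Finsupp.single 2 (-1)
noncomputable def x2 : Fin 3 →₀ ℤ := Finsupp.single 1 (-1) + Finsupp.single 2 1

lemma hdd_expand : dd * dd = TT (-2) (Finsupp.single 0 2) + 1 + 1 + TT 2 (Finsupp.single 0 (-2)) := by
  unfold dd
  rw [add_mul, mul_add, mul_add,
    TT_mul_eq (m' := -2) (e' := Finsupp.single 0 2) (by norm_num)
      (by rw [← Finsupp.single_add]; norm_num),
    TT_mul_eq_one (by norm_num) (by rw [← Finsupp.single_add]; simp),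
    TT_mul_eq_one (by norm_num) (by rw [← Finsupp.single_add]; simp),
    TT_mul_eq (m' := 2) (e' := Finsupp.single 0 (-2)) (by norm_num)
      (by rw [← Finsupp.single_add]; norm_num)]
  abel

lemma hee_expand : ee * ff = 1 + TT 0 x1 + TT 0 x2 + 1 := by
  unfold ee ff
  rw [add_mul, mul_add, mul_add,
    TT_mul_eq_one (by norm_num) (by rw [← Finsupp.single_add]; simp),
    TT_mul_eq (m' := 0) (e' := x1) (by norm_num) rfl,
    TT_mul_eq (m' := 0) (e' := Finsupp.single 1 (-1) + Finsupp.single 2 1) (by norm_num)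
      (add_comm (Finsupp.single (2:Fin 3) 1) (Finsupp.single 1 (-1))),
    TT_mul_eq_one (by norm_num) (by rw [← Finsupp.single_add]; simp)]
  show 1 + TT 0 x1 + (TT 0 (Finsupp.single 1 (-1) + Finsupp.single 2 1) + 1) = _
  abel

lemma hf8 : Finsupp.single (0:Fin 3) 2 + w1 = x1 := by
  ext i
  fin_cases i <;> simp [w1, x1, Finsupp.single_apply]

lemma hf9 : Finsupp.single (0:Fin 3) 2 + w2 = x2 := by
  ext i
  fin_cases i <;> simp [w2, x2, Finsupp.single_apply]

lemma hf10 : Finsupp.single (0:Fin 3) 2 + (w1 + w2) = Finsupp.single 0 (-2) := by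
  ext i
  fin_cases i <;> simp [w1, w2, Finsupp.single_apply]

/-- the determinant identity -/
lemma det_eq : dd * dd - ee * ff
    = TT (-2) (Finsupp.single 0 2) * ((1 - TT 2 w1) * (1 - TT 2 w2)) := by
  have hexp : (1 - TT 2 w1) * (1 - TT 2 w2)
      = 1 - TT 2 w1 - TT 2 w2 + TT 2 w1 * TT 2 w2 := by ring
  rw [hdd_expand, hee_expand, hexp, TT_mul 2 2 w1 w2, mul_add, mul_sub, mul_sub, mul_one,
    TT_mul_eq (m' := 0) (by norm_num) hf8, TT_mul_eq (m' := 0) (by norm_num) hf9,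
    TT_mul_eq (m' := 2) (by norm_num) hf10]
  abel

lemma sc_det : sc * (dd * dd - ee * ff) = 1 := by
  have h0 : TT 2 (Finsupp.single 0 (-2)) * TT (-2) (Finsupp.single 0 2) = 1 :=
    TT_mul_eq_one (by norm_num) (by rw [← Finsupp.single_add]; simp)
  calc sc * (dd * dd - ee * ff)
      = (TT 2 (Finsupp.single 0 (-2)) * TT (-2) (Finsupp.single 0 2)) *
        (((1 - TT 2 w1) * S1) * ((1 - TT 2 w2) * S2)) := by
        rw [det_eq, sc]; ring
    _ = 1 := by rw [h0, S1_inv, S2_inv]; ring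

end Stmt14Aux

open Stmt14Aux in
theorem stmt_14 :
    ∃ Y : Matrix (Fin 2) (Fin 2) (LaurentSeries (AddMonoidAlgebra ℤ (Fin 3 →₀ ℤ))),
      stmt14C * Y = 1 ∧ Y * stmt14C = 1 ∧
      ∀ (i j : Fin 2) (m : ℤ) (γ : Fin 3 →₀ ℤ), 0 ≤ ((Y i j).coeff m).coeff γ := by
  refine ⟨!![sc * dd, sc * ee; sc * ff, sc * dd], ?_, ?_, ?_⟩
  · rw [C_eq]
    refine Matrix.ext fun i j => ?_
    fin_cases i <;> fin_cases j <;>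
      simp [Matrix.mul_apply, Fin.sum_univ_two, Matrix.one_apply] <;>
      first
        | linear_combination sc_det
        | ring
  · rw [C_eq]
    refine Matrix.ext fun i j => ?_
    fin_cases i <;> fin_cases j <;>
      simp [Matrix.mul_apply, Fin.sum_univ_two, Matrix.one_apply] <;>
      first
        | linear_combination sc_det
        | ring
  · intro i j m γ
    fin_cases i <;> fin_cases j <;>
      simp only [Matrix.cons_val_zero, Matrix.cons_val_one, Matrix.head_cons,
        Matrix.cons_val', Matrix.empty_val', Matrix.cons_val_fin_one, Matrix.head_fin_const,
        Fin.zero_eta, Fin.mk_one, Fin.isValue]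
    · exact Pos_mul Pos_sc Pos_dd m γ
    · exact Pos_mul Pos_sc Pos_ee m γ
    · exact Pos_mul Pos_sc Pos_ff m γ
    · exact Pos_mul Pos_sc Pos_dd m γ
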